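/- Let n ≥ 1 and write ȳ_j = 1/y_j. Then Σ_λ ∏_{i=1}^{n} (1 − t^{λ_i−i+n+1}) · s_λ(x_1,…,x_n) · sp_λ(y_1,ȳ_1,…,y_n,ȳ_n) = ( ∏_{i=1}^{n} (1−t x_i^2) ) / ( Δ(x)_n Δ(y)_n ∏_{1≤i<j≤n} (1−ȳ_i ȳ_j) ) · det[ (1−t) / ((1−x_i y_j)(1−t x_i y_j)(1−x_i ȳ_j)(1−t x_i ȳ_j)) ]_{1≤i,j≤n}, where the sum is over all partitions λ with ℓ(λ) ≤ n. -/

import Mathlib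

noncomputable section

open scoped BigOperators

/-- The Vandermonde product `Δ(x)ₙ = ∏_{i<j} (x i - x j)`. -/
def vprod {n : ℕ} (x : Fin n → ℂ) : ℂ :=
  ∏ i : Fin n, ∏ j ∈ Finset.Ioi i, (x i - x j)

/-- The Schur polynomial `s_λ(x₁,…,xₙ) = det[xᵢ^{λⱼ - j + n}]/Δ(x)ₙ` (0-indexed). -/
def schurPoly {n : ℕ} (l : Fin n → ℕ) (x : Fin n → ℂ) : ℂ :=
  (Matrix.of fun i j : Fin n => x i ^ (l j + (n - 1 - (j : ℕ)))).det / vprod x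

/-- The symplectic character (Weyl character formula for `Sp(2n)`, with `ȳ = y⁻¹`):
`sp_λ(y₁,ȳ₁,…,yₙ,ȳₙ) = det[yᵢ^{λⱼ-j+n+1} - ȳᵢ^{λⱼ-j+n+1}] /
  (∏ᵢ (yᵢ - ȳᵢ) ∏_{i<j} (yᵢ-yⱼ)(1-ȳᵢȳⱼ))` (0-indexed exponent `l j + (n - j)`). -/
def spChar {n : ℕ} (l : Fin n → ℕ) (y : Fin n → ℂ) : ℂ :=
  (Matrix.of fun i j : Fin n =>
      y i ^ (l j + (n - (j : ℕ))) - (y i)⁻¹ ^ (l j + (n - (j : ℕ)))).det /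
    ((∏ i : Fin n, (y i - (y i)⁻¹)) *
      ∏ i : Fin n, ∏ j ∈ Finset.Ioi i, ((y i - y j) * (1 - (y i)⁻¹ * (y j)⁻¹)))

lemma pi_hasSum_prod : ∀ (n : ℕ) (f : Fin n → ℕ → ℂ), (∀ j, Summable fun k => ‖f j k‖) →
    Summable (fun g : Fin n → ℕ => ‖∏ j, f j (g j)‖) ∧
    HasSum (fun g : Fin n → ℕ => ∏ j, f j (g j)) (∏ j, ∑' k, f j k) := by
  intro n
  induction n with
  | zero =>
    intro f _
    refine ⟨(hasSum_single (default : Fin 0 → ℕ)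
        (fun b hb => absurd (Subsingleton.elim b default) hb)).summable, ?_⟩
    simpa using hasSum_single (f := fun g : Fin 0 → ℕ => ∏ j, f j (g j)) (default : Fin 0 → ℕ)
      (fun b hb => absurd (Subsingleton.elim b default) hb)
  | succ n ih =>
    intro f hf
    obtain ⟨ihS0, ihH0⟩ := ih (fun j => f j.succ) (fun j => hf j.succ)
    have ihS : Summable (fun g : Fin n → ℕ => ‖∏ j : Fin n, f j.succ (g j)‖) := ihS0
    have ihH : HasSum (fun g : Fin n → ℕ => ∏ j : Fin n, f j.succ (g j))
        (∏ j : Fin n, ∑' k, f j.succ k) := ihH0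
    clear ihS0 ihH0
    have h0 : Summable fun k => ‖f 0 k‖ := hf 0
    let e : ℕ × (Fin n → ℕ) ≃ (Fin (n+1) → ℕ) := Fin.consEquiv (fun _ => ℕ)
    have key : ∀ p : ℕ × (Fin n → ℕ),
        (∏ j, f j ((e p) j)) = f 0 p.1 * ∏ j : Fin n, f j.succ (p.2 j) := by
      intro p
      rw [Fin.prod_univ_succ]
      simp [e, Fin.consEquiv]
    have hSF : Summable (fun p : ℕ × (Fin n → ℕ) => f 0 p.1 * ∏ j : Fin n, f j.succ (p.2 j)) :=
      summable_mul_of_summable_norm (f := fun k => f 0 k)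
        (g := fun g : Fin n → ℕ => ∏ j : Fin n, f j.succ (g j)) h0 ihS
    have hHF : HasSum (fun p : ℕ × (Fin n → ℕ) => f 0 p.1 * ∏ j : Fin n, f j.succ (p.2 j))
        ((∑' k, f 0 k) * (∑' g : Fin n → ℕ, ∏ j : Fin n, f j.succ (g j))) := by
      rw [tsum_mul_tsum_of_summable_norm (f := fun k => f 0 k)
        (g := fun g : Fin n → ℕ => ∏ j : Fin n, f j.succ (g j)) h0 ihS]; exact hSF.hasSum
    constructor
    · have hS2 : Summable (fun p : ℕ × (Fin n → ℕ) =>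
          ‖f 0 p.1‖ * ‖∏ j : Fin n, f j.succ (p.2 j)‖) :=
        Summable.mul_of_nonneg (f := fun k => ‖f 0 k‖)
          (g := fun g : Fin n → ℕ => ‖∏ j : Fin n, f j.succ (g j)‖) h0 ihS
          (fun k => norm_nonneg _) (fun g => norm_nonneg _)
      have hS3 : Summable (fun p : ℕ × (Fin n → ℕ) => ‖∏ j, f j ((e p) j)‖) := by
        apply hS2.congr
        intro p
        rw [key p, norm_mul]
      exact (e.summable_iff (f := fun g : Fin (n+1) → ℕ => ‖∏ j, f j (g j)‖)).1 hS3
    · have hH2 : HasSum (fun p : ℕ × (Fin n → ℕ) => ∏ j, f j ((e p) j))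
          ((∑' k, f 0 k) * (∑' g : Fin n → ℕ, ∏ j : Fin n, f j.succ (g j))) :=
        hHF.congr_fun (fun p => key p)
      have hH3 := (e.hasSum_iff (f := fun g : Fin (n+1) → ℕ => ∏ j, f j (g j))).1 hH2
      rw [ihH.tsum_eq, Fin.prod_univ_succ] at *
      exact hH3

lemma entry_hasSum (x y t : ℂ) (hy0 : y ≠ 0) (hysq : y^2 ≠ 1)
    (h1 : ‖x*y‖ < 1) (h2 : ‖x*y⁻¹‖ < 1) (h3 : ‖t*(x*y)‖ < 1) (h4 : ‖t*(x*y⁻¹)‖ < 1) :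
    HasSum (fun m : ℕ => x^m * ((1 - t^(m+1)) * (y^(m+1) - (y⁻¹)^(m+1)) / (y - y⁻¹)))
      ((1 - t*x^2) * ((1-t) / ((1-x*y)*(1-t*(x*y))*(1-x*y⁻¹)*(1-t*(x*y⁻¹))))) ∧
    Summable (fun m : ℕ =>
      ‖x^m * ((1 - t^(m+1)) * (y^(m+1) - (y⁻¹)^(m+1)) / (y - y⁻¹))‖) := by
  have hyy : y - y⁻¹ ≠ 0 := by
    intro h
    apply hysq
    have h2' := sub_eq_zero.mp h
    rw [sq]
    nth_rewrite 2 [h2']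
    exact mul_inv_cancel₀ hy0
  have e1 : (1 : ℂ) - x*y ≠ 0 := by
    intro h; rw [sub_eq_zero] at h; rw [← h] at h1; simp at h1
  have e2 : (1 : ℂ) - x*y⁻¹ ≠ 0 := by
    intro h; rw [sub_eq_zero] at h; rw [← h] at h2; simp at h2
  have e3 : (1 : ℂ) - t*(x*y) ≠ 0 := by
    intro h; rw [sub_eq_zero] at h; rw [← h] at h3; simp at h3
  have e4 : (1 : ℂ) - t*(x*y⁻¹) ≠ 0 := by
    intro h; rw [sub_eq_zero] at h; rw [← h] at h4; simp at h4
  have g1 := hasSum_geometric_of_norm_lt_one h1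
  have g2 := hasSum_geometric_of_norm_lt_one h2
  have g3 := hasSum_geometric_of_norm_lt_one h3
  have g4 := hasSum_geometric_of_norm_lt_one h4
  have G := ((((g1.mul_left y).sub (g2.mul_left y⁻¹)).sub
      (g3.mul_left (t*y))).add (g4.mul_left (t*y⁻¹))).div_const (y - y⁻¹)
  have hterm : ∀ m : ℕ,
      (y * (x*y)^m - y⁻¹ * (x*y⁻¹)^m - t*y * (t*(x*y))^m + t*y⁻¹ * (t*(x*y⁻¹))^m) / (y - y⁻¹)
        = x^m * ((1 - t^(m+1)) * (y^(m+1) - (y⁻¹)^(m+1)) / (y - y⁻¹)) := by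
    intro m
    rw [mul_div_assoc']
    congr 1
    simp only [pow_succ, mul_pow]
    ring
  constructor
  · have hval : (y*(1-x*y)⁻¹ - y⁻¹*(1-x*y⁻¹)⁻¹ - t*y*(1-t*(x*y))⁻¹
        + t*y⁻¹*(1-t*(x*y⁻¹))⁻¹)/(y-y⁻¹)
        = (1 - t*x^2) * ((1-t) / ((1-x*y)*(1-t*(x*y))*(1-x*y⁻¹)*(1-t*(x*y⁻¹)))) := by
      have hP : (1-x*y)*(1-t*(x*y))*(1-x*y⁻¹)*(1-t*(x*y⁻¹)) ≠ 0 :=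
        mul_ne_zero (mul_ne_zero (mul_ne_zero e1 e3) e2) e4
      rw [mul_div_assoc', div_eq_div_iff hyy hP]
      have step1 : (y*(1-x*y)⁻¹ - y⁻¹*(1-x*y⁻¹)⁻¹ - t*y*(1-t*(x*y))⁻¹ + t*y⁻¹*(1-t*(x*y⁻¹))⁻¹)
          * ((1-x*y)*(1-t*(x*y))*(1-x*y⁻¹)*(1-t*(x*y⁻¹)))
          = y*(1-t*(x*y))*(1-x*y⁻¹)*(1-t*(x*y⁻¹)) - y⁻¹*(1-x*y)*(1-t*(x*y))*(1-t*(x*y⁻¹))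
            - t*y*(1-x*y)*(1-x*y⁻¹)*(1-t*(x*y⁻¹)) + t*y⁻¹*(1-x*y)*(1-t*(x*y))*(1-x*y⁻¹) := by
        generalize hzz : y⁻¹ = z at e2 e4 ⊢
        have i1 := mul_inv_cancel₀ e1
        have i2 := mul_inv_cancel₀ e2
        have i3 := mul_inv_cancel₀ e3
        have i4 := mul_inv_cancel₀ e4
        linear_combination (y*(1-t*(x*y))*(1-x*z)*(1-t*(x*z))) * i1
          - (z*(1-x*y)*(1-t*(x*y))*(1-t*(x*z))) * i2
          - (t*y*(1-x*y)*(1-x*z)*(1-t*(x*z))) * i3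
          + (t*z*(1-x*y)*(1-t*(x*y))*(1-x*z)) * i4
      rw [step1]
      field_simp
      ring
    rw [hval] at G
    exact G.congr_fun (fun m => (hterm m).symm)
  · have hb1 : Summable (fun m : ℕ => ‖y‖*‖x*y‖^m) :=
      (summable_geometric_of_lt_one (norm_nonneg _) h1).mul_left _
    have hb2 : Summable (fun m : ℕ => ‖y⁻¹‖*‖x*y⁻¹‖^m) :=
      (summable_geometric_of_lt_one (norm_nonneg _) h2).mul_left _
    have hb3 : Summable (fun m : ℕ => ‖t*y‖*‖t*(x*y)‖^m) :=
      (summable_geometric_of_lt_one (norm_nonneg _) h3).mul_left _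
    have hb4 : Summable (fun m : ℕ => ‖t*y⁻¹‖*‖t*(x*y⁻¹)‖^m) :=
      (summable_geometric_of_lt_one (norm_nonneg _) h4).mul_left _
    have hbig : Summable (fun m : ℕ =>
        (‖y‖*‖x*y‖^m + ‖y⁻¹‖*‖x*y⁻¹‖^m + ‖t*y‖*‖t*(x*y)‖^m + ‖t*y⁻¹‖*‖t*(x*y⁻¹)‖^m)
          / ‖y - y⁻¹‖) := (((hb1.add hb2).add hb3).add hb4).div_const _
    apply Summable.of_nonneg_of_le (fun m => norm_nonneg _) _ hbig
    intro m
    rw [← hterm m]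
    rw [norm_div]
    have tri : ∀ a b c d : ℂ, ‖a - b - c + d‖ ≤ ‖a‖+‖b‖+‖c‖+‖d‖ := fun a b c d => by
      calc ‖a - b - c + d‖ ≤ ‖a - b - c‖ + ‖d‖ := norm_add_le _ _
        _ ≤ (‖a - b‖ + ‖c‖) + ‖d‖ := by gcongr; exact norm_sub_le _ _
        _ ≤ ((‖a‖ + ‖b‖) + ‖c‖) + ‖d‖ := by gcongr; exact norm_sub_le _ _
        _ = _ := by ring
    gcongr
    refine le_trans (tri _ _ _ _) (le_of_eq ?_)
    simp [norm_mul, norm_pow]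


lemma strictAnti_gap {n : ℕ} {d : Fin n → ℕ} (hd : StrictAnti d) :
    ∀ (m : ℕ) (i j : Fin n), (j:ℕ) = (i:ℕ) + m → d j + m ≤ d i := by
  intro m
  induction m with
  | zero =>
    intro i j h
    have : j = i := Fin.ext (by omega)
    subst this; simp
  | succ m ih =>
    intro i j h
    have hij : (i:ℕ) + m < n := lt_of_le_of_lt (by omega) j.2
    have h1 := ih i ⟨(i:ℕ)+m, hij⟩ rfl
    have h2 : d j < d ⟨(i:ℕ)+m, hij⟩ := hd (by rw [Fin.lt_def]; simp; omega)
    omega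

lemma strictAnti_lb {n : ℕ} {d : Fin n → ℕ} (hd : StrictAnti d) (i : Fin n) :
    n - 1 - (i:ℕ) ≤ d i := by
  have hn : 0 < n := i.pos
  have h1 := strictAnti_gap hd (n - 1 - (i:ℕ)) i ⟨n-1, by omega⟩ (by simp; omega)
  omega

def antitoneEquiv (n : ℕ) : {l : Fin n → ℕ // Antitone l} ≃ {d : Fin n → ℕ // StrictAnti d} where
  toFun l := ⟨fun j => l.1 j + (n - 1 - (j:ℕ)), by
    intro a b hab
    have h1 : l.1 b ≤ l.1 a := l.2 (le_of_lt hab)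
    have hb := b.2
    rw [Fin.lt_def] at hab
    simp only at *
    omega⟩
  invFun d := ⟨fun j => d.1 j - (n - 1 - (j:ℕ)), by
    intro a b hab
    rcases eq_or_lt_of_le hab with h|h
    · subst h; exact le_refl _
    · have h1 := strictAnti_gap d.2 ((b:ℕ)-(a:ℕ)) a b (by rw [Fin.lt_def] at h; omega)
      have h2 := strictAnti_lb d.2 b
      have hb := b.2
      rw [Fin.lt_def] at h
      simp only at *
      omega⟩
  left_inv l := Subtype.ext (funext fun j => by simp)
  right_inv d := Subtype.ext (funext fun j => by
    have := strictAnti_lb d.2 j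
    simp only
    omega)

lemma strictAnti_eq_of_range_eq {n : ℕ} {d d' : Fin n → ℕ} (hd : StrictAnti d)
    (hd' : StrictAnti d') (h : Set.range d = Set.range d') : d = d' := by
  have hm : StrictMono (d ∘ Fin.rev) := fun a b hab => hd (Fin.rev_lt_rev.mpr hab)
  have hm' : StrictMono (d' ∘ Fin.rev) := fun a b hab => hd' (Fin.rev_lt_rev.mpr hab)
  have hr : Set.range (d ∘ Fin.rev) = Set.range (d' ∘ Fin.rev) := by
    rw [Set.range_comp, Set.range_comp, Fin.rev_surjective.range_eq,
      Set.image_univ, Set.image_univ, h]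
  haveI : WellFoundedLT (Fin n) := inferInstance
  have := (hm.range_inj hm').mp hr
  funext j
  have := congrFun this j.rev
  simpa using this

lemma injective_decomp {n : ℕ} (k : Fin n → ℕ) (hk : Function.Injective k) :
    ∃ (d : Fin n → ℕ) (π : Equiv.Perm (Fin n)), StrictAnti d ∧ d ∘ π = k := by
  classical
  set s : Finset ℕ := Finset.image k Finset.univ with hsdef
  have hs : s.card = n := by
    rw [hsdef, Finset.card_image_of_injective _ hk, Finset.card_univ, Fintype.card_fin]
  set iso := s.orderIsoOfFin hs with hiso
  set d : Fin n → ℕ := fun j => (iso j.rev : ℕ) with hddef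
  have hd : StrictAnti d := by
    intro a b hab
    exact iso.strictMono (Fin.rev_lt_rev.mpr hab)
  have hmem : ∀ j, k j ∈ s := fun j => Finset.mem_image_of_mem k (Finset.mem_univ j)
  set π0 : Fin n → Fin n := fun j => (iso.symm ⟨k j, hmem j⟩).rev with hπ0def
  have hcomp : ∀ j, d (π0 j) = k j := by
    intro j
    simp [hddef, hπ0def, Fin.rev_rev]
  have hπ0 : Function.Injective π0 := by
    intro a b hab
    apply hk
    have := congrArg d hab
    rwa [hcomp, hcomp] at this
  refine ⟨d, Equiv.ofBijective π0 (Finite.injective_iff_bijective.mp hπ0), hd,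
    funext fun j => hcomp j⟩

lemma phi_inj {n : ℕ} : Function.Injective
    (fun p : {d : Fin n → ℕ // StrictAnti d} × Equiv.Perm (Fin n) =>
      (p.1.1 ∘ p.2 : Fin n → ℕ)) := by
  rintro ⟨⟨d, hd⟩, π⟩ ⟨⟨d', hd'⟩, π'⟩ h
  simp only at h
  have hr : Set.range d = Set.range d' := by
    rw [← π.surjective.range_comp d, ← π'.surjective.range_comp d', h]
  have hdd : d = d' := strictAnti_eq_of_range_eq hd hd' hr
  subst hdd
  have hππ : π = π' := Equiv.ext fun j => hd.injective (congrFun h j)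
  subst hππ
  rfl

/-- **Refined symplectic Cauchy identity** (Theorem 3):
`Σ_λ ∏_{i=1}^n (1 - t^{λᵢ-i+n+1}) s_λ(x) sp_λ(y,ȳ)
  = (∏ᵢ (1-t xᵢ²)) / (Δ(x)ₙ Δ(y)ₙ ∏_{i<j} (1-ȳᵢȳⱼ))
      · det[(1-t)/((1-xᵢyⱼ)(1-t xᵢyⱼ)(1-xᵢȳⱼ)(1-t xᵢȳⱼ))]`,
the sum being over all partitions `λ` with `ℓ(λ) ≤ n`.  It is stated here for complex
values of the variables in a domain of convergence. -/
theorem refined_symplectic_cauchy (n : ℕ) (hn : 1 ≤ n) (x y : Fin n → ℂ) (t : ℂ)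
    (hx : ∀ i, ‖x i‖ < 1 / (16 * (n : ℝ) ^ 2)) (ht : ‖t‖ < 1)
    (hy1 : ∀ j, 1 / 2 < ‖y j‖) (hy2 : ∀ j, ‖y j‖ < 2)
    (hysq : ∀ j, (y j) ^ 2 ≠ 1) (hyy : ∀ i j, i ≠ j → y i * y j ≠ 1)
    (hxinj : Function.Injective x) (hyinj : Function.Injective y) :
    HasSum
      (fun l : {l : Fin n → ℕ // Antitone l} =>
        (∏ i : Fin n, (1 - t ^ (l.1 i + (n - (i : ℕ))))) * schurPoly l.1 x * spChar l.1 y)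
      ((∏ i : Fin n, (1 - t * x i ^ 2)) /
          (vprod x * vprod y *
            ∏ i : Fin n, ∏ j ∈ Finset.Ioi i, (1 - (y i)⁻¹ * (y j)⁻¹)) *
        (Matrix.of fun i j : Fin n =>
          (1 - t) / ((1 - x i * y j) * (1 - t * (x i * y j)) *
            (1 - x i * (y j)⁻¹) * (1 - t * (x i * (y j)⁻¹)))).det) := by
  classical
  -- basic nonvanishing facts
  have hy0 : ∀ j, y j ≠ 0 := by
    intro j h
    have h1 := hy1 j
    rw [h] at h1
    simp at h1
    linarith
  have hn1 : (1:ℝ) ≤ (n:ℝ) := by exact_mod_cast hn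
  have hx8 : ∀ i, ‖x i‖ < 1/8 := by
    intro i
    have h1 := hx i
    have : 1/(16*(n:ℝ)^2) ≤ 1/8 := by
      rw [div_le_div_iff₀ (by nlinarith) (by norm_num)]
      nlinarith
    linarith
  have hyinv : ∀ j, ‖(y j)⁻¹‖ < 2 := by
    intro j
    rw [norm_inv]
    have h1 := hy1 j
    have h2 : (0:ℝ) < ‖y j‖ := by linarith
    have h3 : ‖y j‖ * ‖y j‖⁻¹ = 1 := mul_inv_cancel₀ (ne_of_gt h2)
    nlinarith [inv_nonneg.mpr (le_of_lt h2)]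
  have hxiy : ∀ i j, ‖x i * y j‖ < 1 := by
    intro i j
    rw [norm_mul]
    have h1 := hx8 i
    have h2 := hy2 j
    nlinarith [norm_nonneg (x i), norm_nonneg (y j)]
  have hxiyb : ∀ i j, ‖x i * (y j)⁻¹‖ < 1 := by
    intro i j
    rw [norm_mul]
    have h1 := hx8 i
    have h2 := hyinv j
    nlinarith [norm_nonneg (x i), norm_nonneg ((y j)⁻¹)]
  have htx : ∀ z : ℂ, ‖z‖ < 1 → ‖t * z‖ < 1 := by
    intro z hz
    rw [norm_mul]
    nlinarith [norm_nonneg t, norm_nonneg z]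
  -- the column series
  set b : Fin n → ℕ → ℂ := fun j m =>
    (1 - t^(m+1)) * ((y j)^(m+1) - ((y j)⁻¹)^(m+1)) / (y j - (y j)⁻¹) with hbdef
  set E : Matrix (Fin n) (Fin n) ℂ := Matrix.of fun i j =>
    (1 - t*(x i)^2) * ((1-t) / ((1 - x i * y j) * (1 - t*(x i * y j)) *
      (1 - x i * (y j)⁻¹) * (1 - t*(x i * (y j)⁻¹)))) with hEdef
  have hEfull := fun i j => entry_hasSum (x i) (y j) t (hy0 j) (hysq j)
    (hxiy i j) (hxiyb i j) (htx _ (hxiy i j)) (htx _ (hxiyb i j))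
  have hE : ∀ i j, HasSum (fun m => (x i)^m * b j m) (E i j) := fun i j => (hEfull i j).1
  have hES : ∀ i j, Summable (fun m => ‖(x i)^m * b j m‖) := fun i j => (hEfull i j).2
  -- per-permutation product series
  have hσ : ∀ σ : Equiv.Perm (Fin n),
      HasSum (fun g : Fin n → ℕ => ∏ j, (x (σ j))^(g j) * b j (g j)) (∏ j, E (σ j) j) := by
    intro σ
    have h := (pi_hasSum_prod n (fun j m => (x (σ j))^m * b j m) (fun j => hES (σ j) j)).2
    have hv : (∏ j : Fin n, ∑' m : ℕ, (x (σ j))^m * b j m) = ∏ j : Fin n, E (σ j) j :=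
      Finset.prod_congr rfl fun j _ => (hE (σ j) j).tsum_eq
    rwa [hv] at h
  -- the coefficient function
  set c : (Fin n → ℕ) → ℂ := fun g =>
    ∑ σ : Equiv.Perm (Fin n), ((Equiv.Perm.sign σ : ℤ) : ℂ) *
      ∏ j, (x (σ j))^(g j) * b j (g j) with hcdef
  have hcH : HasSum c E.det := by
    rw [Matrix.det_apply']
    exact hasSum_sum (fun σ _ => (hσ σ).mul_left _)
  have hcg : ∀ g : Fin n → ℕ,
      c g = (Matrix.of fun i j : Fin n => x i ^ (g j)).det * ∏ j, b j (g j) := by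
    intro g
    rw [hcdef]
    simp only
    rw [Matrix.det_apply', Finset.sum_mul]
    refine Finset.sum_congr rfl fun σ _ => ?_
    rw [Finset.prod_mul_distrib]
    simp only [Matrix.of_apply]
    ring
  -- support is contained in the injective functions
  have hvan : ∀ g, g ∉ Set.range (fun p : {d : Fin n → ℕ // StrictAnti d} × Equiv.Perm (Fin n) =>
      (p.1.1 ∘ p.2 : Fin n → ℕ)) → c g = 0 := by
    intro g hg
    have hginj : ¬ Function.Injective g := by
      intro hinj
      obtain ⟨d, π, hd, hdp⟩ := injective_decomp g hinj
      exact hg ⟨(⟨d, hd⟩, π), hdp⟩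
    rw [Function.not_injective_iff] at hginj
    obtain ⟨a, a', hab, hne⟩ := hginj
    rw [hcg g, Matrix.det_zero_of_column_eq hne (fun k => by simp [Matrix.of_apply, hab]),
      zero_mul]
  have hΦH : HasSum (c ∘ (fun p : {d : Fin n → ℕ // StrictAnti d} × Equiv.Perm (Fin n) =>
      (p.1.1 ∘ p.2 : Fin n → ℕ))) E.det := (phi_inj.hasSum_iff hvan).mpr hcH
  -- fiberwise summation over the permutation coordinate
  set A : {d : Fin n → ℕ // StrictAnti d} → ℂ :=
    fun d => (Matrix.of fun i j : Fin n => x i ^ (d.1 j)).det with hAdef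
  set B : {d : Fin n → ℕ // StrictAnti d} → ℂ :=
    fun d => (Matrix.of fun i j : Fin n => b j (d.1 i)).det with hBdef
  have hfib : ∀ d : {d : Fin n → ℕ // StrictAnti d},
      HasSum (fun π : Equiv.Perm (Fin n) =>
        c (d.1 ∘ π)) (A d * B d) := by
    intro d
    have h1 := hasSum_fintype (fun π : Equiv.Perm (Fin n) => c (d.1 ∘ π))
    have hval : ∑ π : Equiv.Perm (Fin n), c (d.1 ∘ π) = A d * B d := by
      have hstep : ∀ π : Equiv.Perm (Fin n),
          c (d.1 ∘ π) = A d * (((Equiv.Perm.sign π : ℤ) : ℂ) * ∏ j, b j (d.1 (π j))) := by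
        intro π
        rw [hcg]
        have hsub : (Matrix.of fun i j : Fin n => x i ^ ((d.1 ∘ π) j)).det
            = ((Equiv.Perm.sign π : ℤ) : ℂ) * A d := by
          rw [hAdef]
          simp only
          rw [← Matrix.det_permute' π (Matrix.of fun i j : Fin n => x i ^ (d.1 j))]
          rfl
        rw [hsub]
        have : ∀ j, (d.1 ∘ π) j = d.1 (π j) := fun j => rfl
        simp only [Function.comp_apply]
        ring
      rw [Finset.sum_congr rfl (fun π _ => hstep π), ← Finset.mul_sum]
      congr 1
      rw [hBdef]
      simp only
      rw [Matrix.det_apply']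
      rfl
    rwa [hval] at h1
  have hDH : HasSum (fun d : {d : Fin n → ℕ // StrictAnti d} => A d * B d) E.det :=
    hΦH.prod_fiberwise hfib
  -- transport to antitone sequences
  have hLH : HasSum (fun l : {l : Fin n → ℕ // Antitone l} =>
      A (antitoneEquiv n l) * B (antitoneEquiv n l)) E.det :=
    ((antitoneEquiv n).hasSum_iff (f := fun d => A d * B d)).mpr hDH
  -- nonvanishing of the various Vandermonde-type products
  have hvx : vprod x ≠ 0 := by
    rw [vprod]
    apply Finset.prod_ne_zero_iff.mpr
    intro i _
    apply Finset.prod_ne_zero_iff.mpr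
    intro j hj
    have : i ≠ j := ne_of_lt (Finset.mem_Ioi.mp hj)
    exact sub_ne_zero_of_ne (fun h => this (hxinj h))
  have hvy : vprod y ≠ 0 := by
    rw [vprod]
    apply Finset.prod_ne_zero_iff.mpr
    intro i _
    apply Finset.prod_ne_zero_iff.mpr
    intro j hj
    have : i ≠ j := ne_of_lt (Finset.mem_Ioi.mp hj)
    exact sub_ne_zero_of_ne (fun h => this (hyinj h))
  have hIone : ∀ i j : Fin n, i ≠ j → (1 : ℂ) - (y i)⁻¹ * (y j)⁻¹ ≠ 0 := by
    intro i j hij h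
    rw [sub_eq_zero] at h
    apply hyy i j hij
    have h2 : ((y i) * (y j))⁻¹ = 1 := by rw [mul_inv]; exact h.symm
    rw [inv_eq_one] at h2
    exact h2
  have hIy : (∏ i : Fin n, ∏ j ∈ Finset.Ioi i, (1 - (y i)⁻¹ * (y j)⁻¹)) ≠ 0 := by
    apply Finset.prod_ne_zero_iff.mpr
    intro i _
    apply Finset.prod_ne_zero_iff.mpr
    intro j hj
    exact hIone i j (ne_of_lt (Finset.mem_Ioi.mp hj))
  have hyyb : ∀ j, y j - (y j)⁻¹ ≠ 0 := by
    intro j h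
    apply hysq j
    have h2' := sub_eq_zero.mp h
    rw [sq]
    nth_rewrite 2 [h2']
    exact mul_inv_cancel₀ (hy0 j)
  have hPy : (∏ i : Fin n, (y i - (y i)⁻¹)) ≠ 0 :=
    Finset.prod_ne_zero_iff.mpr (fun i _ => hyyb i)
  have hQy : (∏ i : Fin n, ∏ j ∈ Finset.Ioi i, ((y i - y j) * (1 - (y i)⁻¹ * (y j)⁻¹))) ≠ 0 := by
    apply Finset.prod_ne_zero_iff.mpr
    intro i _
    apply Finset.prod_ne_zero_iff.mpr
    intro j hj
    have hij : i ≠ j := ne_of_lt (Finset.mem_Ioi.mp hj)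
    exact mul_ne_zero (sub_ne_zero_of_ne (fun h => hij (hyinj h))) (hIone i j hij)
  set D : ℂ := vprod x * vprod y *
    ∏ i : Fin n, ∏ j ∈ Finset.Ioi i, (1 - (y i)⁻¹ * (y j)⁻¹) with hDdef
  have hD : D ≠ 0 := mul_ne_zero (mul_ne_zero hvx hvy) hIy
  -- identify each fiber sum with the summand of the theorem
  have hterm : ∀ l : {l : Fin n → ℕ // Antitone l},
      A (antitoneEquiv n l) * B (antitoneEquiv n l) =
        ((∏ i : Fin n, (1 - t ^ (l.1 i + (n - (i : ℕ))))) * schurPoly l.1 x * spChar l.1 y)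
          * D := by
    intro l
    have hd1 : (antitoneEquiv n l).1 = fun j => l.1 j + (n - 1 - (j:ℕ)) := rfl
    have hexp : ∀ i : Fin n, l.1 i + (n - 1 - (i:ℕ)) + 1 = l.1 i + (n - (i:ℕ)) := by
      intro i
      have := i.2
      omega
    have hA : A (antitoneEquiv n l) = schurPoly l.1 x * vprod x := by
      rw [hAdef]
      simp only [hd1]
      rw [schurPoly, div_mul_cancel₀ _ hvx]
    have hBmat : (Matrix.of fun i j : Fin n => b j ((antitoneEquiv n l).1 i)) =
        Matrix.of fun i j : Fin n => (1 - t^(l.1 i + (n - (i:ℕ)))) *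
          ((y j - (y j)⁻¹)⁻¹ *
            ((y j)^(l.1 i + (n - (i:ℕ))) - ((y j)⁻¹)^(l.1 i + (n - (i:ℕ))))) := by
      ext i j
      simp only [Matrix.of_apply, hd1, hbdef]
      rw [hexp i]
      rw [div_eq_mul_inv]
      ring
    have hB : B (antitoneEquiv n l) =
        (∏ i : Fin n, (1 - t^(l.1 i + (n - (i:ℕ))))) *
          ((∏ j : Fin n, (y j - (y j)⁻¹)⁻¹) *
            (Matrix.of fun i j : Fin n =>
              (y j)^(l.1 i + (n - (i:ℕ))) - ((y j)⁻¹)^(l.1 i + (n - (i:ℕ)))).det) := by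
      rw [hBdef]
      simp only
      rw [hBmat]
      have h2 : (Matrix.of fun i j : Fin n => (y j - (y j)⁻¹)⁻¹ *
          ((y j)^(l.1 i + (n - (i:ℕ))) - ((y j)⁻¹)^(l.1 i + (n - (i:ℕ))))).det =
          (∏ j : Fin n, (y j - (y j)⁻¹)⁻¹) * (Matrix.of fun i j : Fin n =>
            (y j)^(l.1 i + (n - (i:ℕ))) - ((y j)⁻¹)^(l.1 i + (n - (i:ℕ)))).det :=
        Matrix.det_mul_row _ _
      have h1 : (Matrix.of fun i j : Fin n => (1 - t^(l.1 i + (n - (i:ℕ)))) *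
          ((y j - (y j)⁻¹)⁻¹ *
            ((y j)^(l.1 i + (n - (i:ℕ))) - ((y j)⁻¹)^(l.1 i + (n - (i:ℕ)))))).det =
          (∏ i : Fin n, (1 - t^(l.1 i + (n - (i:ℕ))))) * (Matrix.of fun i j : Fin n =>
            (y j - (y j)⁻¹)⁻¹ *
              ((y j)^(l.1 i + (n - (i:ℕ))) - ((y j)⁻¹)^(l.1 i + (n - (i:ℕ))))).det :=
        Matrix.det_mul_column _ _
      exact h1.trans (by rw [h2])
    have hWS : (Matrix.of fun i j : Fin n =>
        (y j)^(l.1 i + (n - (i:ℕ))) - ((y j)⁻¹)^(l.1 i + (n - (i:ℕ)))).det =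
        (Matrix.of fun i j : Fin n =>
          y i ^ (l.1 j + (n - (j : ℕ))) - (y i)⁻¹ ^ (l.1 j + (n - (j : ℕ)))).det := by
      rw [← Matrix.det_transpose]
      congr 1
    have hSdet : (Matrix.of fun i j : Fin n =>
        y i ^ (l.1 j + (n - (j : ℕ))) - (y i)⁻¹ ^ (l.1 j + (n - (j : ℕ)))).det =
        spChar l.1 y * ((∏ i : Fin n, (y i - (y i)⁻¹)) *
          ∏ i : Fin n, ∏ j ∈ Finset.Ioi i, ((y i - y j) * (1 - (y i)⁻¹ * (y j)⁻¹))) := by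
      rw [spChar, div_mul_cancel₀ _ (mul_ne_zero hPy hQy)]
    have hQsplit : (∏ i : Fin n, ∏ j ∈ Finset.Ioi i, ((y i - y j) * (1 - (y i)⁻¹ * (y j)⁻¹)))
        = vprod y * ∏ i : Fin n, ∏ j ∈ Finset.Ioi i, (1 - (y i)⁻¹ * (y j)⁻¹) := by
      rw [vprod, ← Finset.prod_mul_distrib]
      exact Finset.prod_congr rfl fun i _ => Finset.prod_mul_distrib
    have hPinv : (∏ j : Fin n, (y j - (y j)⁻¹)⁻¹) = (∏ i : Fin n, (y i - (y i)⁻¹))⁻¹ := by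
      rw [← Finset.prod_inv_distrib]
    have hcan : ∀ z : ℂ, (∏ i : Fin n, (y i - (y i)⁻¹))⁻¹ *
        (spChar l.1 y * ((∏ i : Fin n, (y i - (y i)⁻¹)) * z)) = spChar l.1 y * z := by
      intro z
      linear_combination (spChar l.1 y * z) * inv_mul_cancel₀ hPy
    rw [hA, hB, hWS, hSdet, hQsplit, hPinv, hcan, hDdef]
    ring
  -- pull out the (1 - t x^2) factors from the determinant
  have hEdet : E.det = (∏ i : Fin n, (1 - t * x i ^ 2)) *
      (Matrix.of fun i j : Fin n =>
        (1 - t) / ((1 - x i * y j) * (1 - t * (x i * y j)) *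
          (1 - x i * (y j)⁻¹) * (1 - t * (x i * (y j)⁻¹)))).det := by
    rw [hEdef]
    rw [← Matrix.det_mul_column (fun i => (1 - t * x i ^ 2))
      (Matrix.of fun i j : Fin n =>
        (1 - t) / ((1 - x i * y j) * (1 - t * (x i * y j)) *
          (1 - x i * (y j)⁻¹) * (1 - t * (x i * (y j)⁻¹))))]
    rfl
  -- conclude
  have final := hLH.div_const D
  have htgt : E.det / D = (∏ i : Fin n, (1 - t * x i ^ 2)) /
      (vprod x * vprod y *
        ∏ i : Fin n, ∏ j ∈ Finset.Ioi i, (1 - (y i)⁻¹ * (y j)⁻¹)) *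
      (Matrix.of fun i j : Fin n =>
        (1 - t) / ((1 - x i * y j) * (1 - t * (x i * y j)) *
          (1 - x i * (y j)⁻¹) * (1 - t * (x i * (y j)⁻¹)))).det := by
    rw [hEdet, ← hDdef]
    ring
  rw [← htgt]
  refine final.congr_fun fun l => ?_
  rw [hterm l, mul_div_cancel_right₀ _ hD]
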